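/- As z → ∞, I(z)/z⁵ → 48, where I(z) = ∫_{2/z}^∞ e^{-(x-2/z)}(1/x + 3/x² + 3/x³)(z²x² - 4)^{5/2} dx. -/

import Mathlib

open Real MeasureTheory Set Filter

lemma rpow_52_of_nonpos {a : ℝ} (ha : a ≤ 0) : a ^ ((5:ℝ)/2) = 0 := by
  rcases lt_or_eq_of_le ha with h | h
  · rw [Real.rpow_def_of_neg h]
    have : Real.cos ((5:ℝ)/2 * π) = 0 := by
      have : (5:ℝ)/2 * π = π/2 + 2*π := by ring
      rw [this, Real.cos_add_two_pi, Real.cos_pi_div_two]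
    simp [this]
  · rw [h]; exact Real.zero_rpow (by norm_num)

lemma rpow_52_nonneg (a : ℝ) : 0 ≤ a ^ ((5:ℝ)/2) := by
  rcases le_or_gt a 0 with h | h
  · rw [rpow_52_of_nonpos h]
  · exact (Real.rpow_pos_of_pos h _).le

lemma integrableOn_exp_neg_pow (n : ℕ) :
    IntegrableOn (fun x : ℝ => Real.exp (-x) * x ^ n) (Ioi 0) := by
  have h := Real.GammaIntegral_convergent (s := (n:ℝ)+1) (by positivity)
  refine h.congr_fun (fun x hx => ?_) measurableSet_Ioi
  rw [add_sub_cancel_right]; simp only [Real.rpow_natCast]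

lemma integral_exp_neg_pow (n : ℕ) :
    ∫ x in Ioi (0:ℝ), Real.exp (-x) * x ^ n = (n.factorial : ℝ) := by
  have h := Real.Gamma_eq_integral (s := (n:ℝ)+1) (by positivity)
  rw [Real.Gamma_nat_eq_factorial] at h
  rw [h]
  refine setIntegral_congr_fun measurableSet_Ioi (fun x hx => ?_)
  rw [add_sub_cancel_right, Real.rpow_natCast]

lemma limit_integral :
    ∫ x in Ioi (0:ℝ), Real.exp (-x) * (x^4 + 3*x^3 + 3*x^2) = 48 := by
  have h4 := integral_exp_neg_pow 4
  have h3 := integral_exp_neg_pow 3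
  have h2 := integral_exp_neg_pow 2
  have i4 := integrableOn_exp_neg_pow 4
  have i3 := integrableOn_exp_neg_pow 3
  have i2 := integrableOn_exp_neg_pow 2
  have : ∫ x in Ioi (0:ℝ), Real.exp (-x) * (x^4 + 3*x^3 + 3*x^2)
      = (∫ x in Ioi (0:ℝ), Real.exp (-x) * x^4) + 3 * (∫ x in Ioi (0:ℝ), Real.exp (-x) * x^3)
        + 3 * (∫ x in Ioi (0:ℝ), Real.exp (-x) * x^2) := by
    rw [← integral_const_mul, ← integral_const_mul, ← integral_add, ← integral_add]
    · congr 1; ext x; ring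
    · exact i4.add (i3.const_mul 3)
    · exact i2.const_mul 3
    · exact i4
    · exact i3.const_mul 3
  rw [this, h4, h3, h2]; norm_num [Nat.factorial]

lemma integrable_limit : IntegrableOn (fun x : ℝ => Real.exp (-x) * (x^4+3*x^3+3*x^2)) (Ioi 0) := by
  have h : IntegrableOn (fun x : ℝ => Real.exp (-x) * x^4 + 3*(Real.exp (-x) * x^3)
      + 3*(Real.exp (-x) * x^2)) (Ioi 0) :=
    ((integrableOn_exp_neg_pow 4).add ((integrableOn_exp_neg_pow 3).const_mul 3)).add
    ((integrableOn_exp_neg_pow 2).const_mul 3)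
  refine h.congr_fun (fun x hx => ?_) measurableSet_Ioi
  ring

lemma sq_rpow_52 {a : ℝ} (ha : 0 ≤ a) : (a^2) ^ ((5:ℝ)/2) = a^5 := by
  rw [← Real.rpow_natCast a 2, ← Real.rpow_mul ha]
  norm_num

noncomputable def Ifun (z : ℝ) : ℝ :=
  ∫ x in Set.Ici (2/z),
    Real.exp (-(x - 2/z)) * (1/x + 3/x^2 + 3/x^3) * (z^2 * x^2 - 4) ^ ((5:ℝ)/2)

theorem stmt12 :
    Filter.Tendsto (fun z : ℝ => Ifun z / z^5) Filter.atTop (nhds 48) := by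
  set F : ℝ → ℝ → ℝ := fun z x =>
    Real.exp (-(x - 2/z)) * (1/x + 3/x^2 + 3/x^3) * (z^2 * x^2 - 4) ^ ((5:ℝ)/2) / z^5 with hF
  have key : Tendsto (fun z : ℝ => ∫ x in Ioi (0:ℝ), F z x) atTop
      (nhds (∫ x in Ioi (0:ℝ), Real.exp (-x) * (x^4 + 3*x^3 + 3*x^2))) := by
    apply tendsto_integral_filter_of_dominated_convergence
      (fun x => Real.exp 2 * (Real.exp (-x) * (x^4 + 3*x^3 + 3*x^2)))
    · filter_upwards with z
      apply Measurable.aestronglyMeasurable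
      fun_prop
    · filter_upwards [eventually_ge_atTop (1:ℝ)] with z hz
      rw [ae_restrict_iff' measurableSet_Ioi]
      filter_upwards with x hx
      have hx0 : (0:ℝ) < x := hx
      have hz0 : (0:ℝ) < z := lt_of_lt_of_le one_pos hz
      have hP : (0:ℝ) < 1/x + 3/x^2 + 3/x^3 := by positivity
      have hnn : 0 ≤ F z x := by
        apply div_nonneg _ (by positivity)
        have := rpow_52_nonneg (z^2*x^2-4)
        positivity
      rw [Real.norm_eq_abs, abs_of_nonneg hnn]
      simp only [hF]
      have hR : (z^2*x^2-4) ^ ((5:ℝ)/2) ≤ z^5 * x^5 := by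
        rcases le_or_gt (z^2*x^2-4) 0 with h | h
        · rw [rpow_52_of_nonpos h]; positivity
        · calc (z^2*x^2-4) ^ ((5:ℝ)/2) ≤ (z^2*x^2) ^ ((5:ℝ)/2) := by
                apply Real.rpow_le_rpow h.le (by linarith) (by norm_num)
            _ = z^5 * x^5 := by
                rw [show z^2*x^2 = (z*x)^2 by ring, sq_rpow_52 (by positivity)]; ring
      have h1 : Real.exp (-(x - 2/z)) * (1/x + 3/x^2 + 3/x^3) * (z^2 * x^2 - 4) ^ ((5:ℝ)/2) / z^5 ≤ Real.exp (-(x - 2/z)) * (1/x + 3/x^2 + 3/x^3) * (z^5 * x^5) / z^5 := by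
        gcongr
      refine h1.trans ?_
      have heq : Real.exp (-(x - 2/z)) * (1/x + 3/x^2 + 3/x^3) * (z^5 * x^5) / z^5
          = Real.exp (2/z) * (Real.exp (-x) * (x^4 + 3*x^3 + 3*x^2)) := by
        rw [show -(x - 2/z) = 2/z + (-x) by ring, Real.exp_add]
        field_simp
      rw [heq]
      have h2 : Real.exp (2/z) ≤ Real.exp 2 := by
        apply Real.exp_le_exp.mpr
        rw [div_le_iff₀ hz0]; linarith
      gcongr

    · exact (integrable_limit.const_mul _)
    · rw [ae_restrict_iff' measurableSet_Ioi]
      filter_upwards with x hx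
      have hx0 : (0:ℝ) < x := hx
      have hxne : x ≠ 0 := hx0.ne'
      have t0 : Tendsto (fun z : ℝ => 2/z) atTop (nhds 0) :=
        tendsto_const_nhds.div_atTop tendsto_id
      have t1 : Tendsto (fun z : ℝ => Real.exp (2/z)) atTop (nhds 1) := by
        have := (Real.continuous_exp.tendsto 0).comp t0
        simpa [Function.comp_def] using this
      have tb : Tendsto (fun z : ℝ => x^2 - 4/z^2) atTop (nhds (x^2)) := by
        have : Tendsto (fun z : ℝ => 4/z^2) atTop (nhds 0) :=
          tendsto_const_nhds.div_atTop (tendsto_pow_atTop two_ne_zero)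
        simpa using tendsto_const_nhds.sub this
      have t2 : Tendsto (fun z : ℝ => (x^2 - 4/z^2) ^ ((5:ℝ)/2)) atTop (nhds (x^5)) := by
        have := tb.rpow_const (p := (5:ℝ)/2) (Or.inr (by norm_num))
        rwa [sq_rpow_52 hx0.le] at this
      have tc : Tendsto (fun _ : ℝ => Real.exp (-x) * (1/x + 3/x^2 + 3/x^3)) atTop
          (nhds (Real.exp (-x) * (1/x + 3/x^2 + 3/x^3))) := tendsto_const_nhds
      have tall := (t1.mul tc).mul t2
      rw [one_mul] at tall
      have hlimeq : Real.exp (-x) * (1/x + 3/x^2 + 3/x^3) * x^5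
          = Real.exp (-x) * (x^4 + 3*x^3 + 3*x^2) := by field_simp
      rw [hlimeq] at tall
      refine Tendsto.congr' ?_ tall
      filter_upwards [eventually_ge_atTop (4/x), eventually_ge_atTop (1:ℝ)] with z hz4 hz1
      have hz0 : (0:ℝ) < z := lt_of_lt_of_le one_pos hz1
      have hzx : (4:ℝ) ≤ z * x := by
        rw [div_le_iff₀ hx0] at hz4; linarith
      have hbase : 0 ≤ x^2 - 4/z^2 := by
        rw [sub_nonneg, div_le_iff₀ (by positivity)]
        nlinarith
      have hsplit : z^2 * x^2 - 4 = z^2 * (x^2 - 4/z^2) := by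
        field_simp
      rw [hF]
      simp only
      rw [hsplit, Real.mul_rpow (by positivity) hbase,
        sq_rpow_52 hz0.le,
        show -(x - 2/z) = 2/z + (-x) by ring, Real.exp_add]
      field_simp
  have hval : (∫ x in Ioi (0:ℝ), Real.exp (-x) * (x^4 + 3*x^3 + 3*x^2)) = 48 := limit_integral
  rw [hval] at key
  refine Tendsto.congr' ?_ key
  filter_upwards [eventually_gt_atTop (0:ℝ)] with z hz0
  have h2z : 0 < 2/z := by positivity
  have step1 : (∫ x in Ioi (0:ℝ), Real.exp (-(x - 2/z)) * (1/x + 3/x^2 + 3/x^3)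
      * (z^2 * x^2 - 4) ^ ((5:ℝ)/2)) = Ifun z := by
    have e1 : ∀ x ∈ Ioi (0:ℝ),
        Real.exp (-(x - 2/z)) * (1/x + 3/x^2 + 3/x^3) * (z^2 * x^2 - 4) ^ ((5:ℝ)/2)
        = (Ici (2/z)).indicator (fun x =>
            Real.exp (-(x - 2/z)) * (1/x + 3/x^2 + 3/x^3) * (z^2 * x^2 - 4) ^ ((5:ℝ)/2)) x := by
      intro x hx
      by_cases h : x ∈ Ici (2/z)
      · rw [indicator_of_mem h]
      · rw [indicator_of_notMem h]
        have hxlt : x < 2/z := lt_of_not_ge h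
        have : z^2 * x^2 - 4 ≤ 0 := by
          have hx0 : (0:ℝ) < x := hx
          rw [lt_div_iff₀ hz0] at hxlt
          nlinarith [mul_pos hx0 hz0]
        rw [rpow_52_of_nonpos this, mul_zero]
    have hset : Ioi (0:ℝ) ∩ Ici (2/z) = Ici (2/z) :=
      inter_eq_self_of_subset_right (fun x hx => lt_of_lt_of_le h2z hx)
    rw [setIntegral_congr_fun measurableSet_Ioi e1,
      setIntegral_indicator measurableSet_Ici, hset]
    rfl
  calc (fun z => ∫ x in Ioi (0:ℝ), F z x) z
      = (∫ x in Ioi (0:ℝ), Real.exp (-(x - 2/z)) * (1/x + 3/x^2 + 3/x^3)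
          * (z^2 * x^2 - 4) ^ ((5:ℝ)/2)) / z^5 := by
        rw [hF]; exact integral_div _ _
    _ = Ifun z / z^5 := by rw [step1]
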